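/- arXiv:2501.04191 — 2 statements merged into one kernel-verified Lean document; each statement's English description precedes it below -/
import Mathlib

section
/- Let λ, μ be incomparable (in dominance order) partitions of length 3 with the same size n, with λ₁ > μ₁ and λ₃ = μ₃ + 1, such that the convex hull P of all permutations of λ and μ has {λ, μ} as its set of dominance-maximal partition lattice points. Then for every t ∈ ℤ_{>0}, the polynomial ts = Σ_{i=0}^{t} s_{(t−i)λ + iμ} (Schur polynomials in 3 variables) has saturated Newton polytope, and Newt(ts) = tP. -/
open Pointwise

/-- The content of a semistandard Young tableau. -/
def content {μ : YoungDiagram} (T : SemistandardYoungTableau μ) (v : ℕ) : ℕ :=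
  (μ.cells.filter fun c => T c.1 c.2 = v).card

/-- Content vectors of semistandard Young tableaux of shape `D` with entries in `{0,1,2}`:
the support of the Schur polynomial `s_D` in 3 variables. -/
def ssytContents (D : YoungDiagram) : Set (Fin 3 → ℕ) :=
  {α | ∃ T : SemistandardYoungTableau D,
    (∀ c ∈ D.cells, T c.1 c.2 < 3) ∧ ∀ i : Fin 3, content T (i : ℕ) = α i}

/-- `D` is the Young diagram of the length-3 partition `ν`. -/
def HasShape (D : YoungDiagram) (ν : Fin 3 → ℕ) : Prop :=
  ∀ r : ℕ, D.rowLen r = if h : r < 3 then ν ⟨r, h⟩ else 0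

/-- Cast a vector of naturals to a real vector. -/
def castN (α : Fin 3 → ℕ) : Fin 3 → ℝ := fun i => (α i : ℝ)

/-- The set of all coordinate permutations of `v`. -/
def perms (v : Fin 3 → ℝ) : Set (Fin 3 → ℝ) :=
  {w | ∃ π : Equiv.Perm (Fin 3), w = v ∘ π}

/-- `p` is a partition of length 3 (weakly decreasing). -/
def IsPartition3 (p : Fin 3 → ℕ) : Prop := p 0 ≥ p 1 ∧ p 1 ≥ p 2

/-- Dominance order: `Dom p q` means `p ⊴ q`. -/
def Dom (p q : Fin 3 → ℕ) : Prop :=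
  p 0 ≤ q 0 ∧ p 0 + p 1 ≤ q 0 + q 1

/-- `p` is a dominance-maximal partition lattice point of `P`. -/
def IsMaxPLP (P : Set (Fin 3 → ℝ)) (p : Fin 3 → ℕ) : Prop :=
  (IsPartition3 p ∧ castN p ∈ P) ∧
    ∀ q : Fin 3 → ℕ, (IsPartition3 q ∧ castN q ∈ P) → Dom p q → q = p

/-- The support of `ts = Σ_{i=0}^t s_{(t-i)λ + iμ}`. -/
def suppTS (l m : Fin 3 → ℕ) (t : ℕ) : Set (Fin 3 → ℕ) :=
  {α | ∃ i ≤ t, ∃ D : YoungDiagram,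
    HasShape D (fun j => (t - i) * l j + i * m j) ∧ α ∈ ssytContents D}


open Finset

def cells3 (A B C : ℕ) : Finset (ℕ × ℕ) :=
  ((Finset.range A).image fun j => (0, j)) ∪ ((Finset.range B).image fun j => (1, j)) ∪
    ((Finset.range C).image fun j => (2, j))

lemma mem_cells3 {A B C : ℕ} {c : ℕ × ℕ} :
    c ∈ cells3 A B C ↔ (c.1 = 0 ∧ c.2 < A) ∨ (c.1 = 1 ∧ c.2 < B) ∨ (c.1 = 2 ∧ c.2 < C) := by
  rcases c with ⟨i, j⟩
  simp only [cells3, Finset.mem_union, Finset.mem_image, Finset.mem_range, Prod.mk.injEq]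
  constructor
  · rintro ((⟨a, ha, h1, h2⟩ | ⟨a, ha, h1, h2⟩) | ⟨a, ha, h1, h2⟩) <;> omega
  · rintro (⟨rfl, hj⟩ | ⟨rfl, hj⟩ | ⟨rfl, hj⟩)
    · exact Or.inl (Or.inl ⟨j, hj, rfl, rfl⟩)
    · exact Or.inl (Or.inr ⟨j, hj, rfl, rfl⟩)
    · exact Or.inr ⟨j, hj, rfl, rfl⟩

lemma card_cells3 (A B C : ℕ) : (cells3 A B C).card = A + B + C := by
  rw [cells3, Finset.card_union_of_disjoint, Finset.card_union_of_disjoint] <;>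
  first
    | (rw [Finset.card_image_of_injective, Finset.card_image_of_injective,
          Finset.card_image_of_injective, Finset.card_range, Finset.card_range,
          Finset.card_range] <;> intro a b h <;> simpa using h)
    | (rw [Finset.disjoint_left]; intro a ha hb; simp [Prod.ext_iff] at ha hb;
        rcases a with ⟨i,j⟩; rcases ha with ⟨a,_,h1,h2⟩ | ⟨a,_,h1,h2⟩ <;>
        rcases hb with ⟨b,_,h3,h4⟩ <;> omega)
    | (rw [Finset.disjoint_left]; intro a ha hb; simp [Prod.ext_iff] at ha hb;
        rcases a with ⟨i,j⟩; rcases ha with ⟨a,_,h1,h2⟩ <;>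
        rcases hb with ⟨b,_,h3,h4⟩ <;> omega)

def YD3 (A B C : ℕ) (hAB : B ≤ A) (hBC : C ≤ B) : YoungDiagram where
  cells := cells3 A B C
  isLowerSet := by
    rintro ⟨i, j⟩ ⟨i', j'⟩ ⟨hi, hj⟩ h
    simp only [Finset.mem_coe, mem_cells3] at *
    omega

lemma mem_YD3 {A B C : ℕ} {hAB : B ≤ A} {hBC : C ≤ B} {c : ℕ × ℕ} :
    c ∈ YD3 A B C hAB hBC ↔ (c.1 = 0 ∧ c.2 < A) ∨ (c.1 = 1 ∧ c.2 < B) ∨ (c.1 = 2 ∧ c.2 < C) :=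
  mem_cells3

lemma rowLen_eq_of {D : YoungDiagram} {i L : ℕ} (h : ∀ j, (i, j) ∈ D ↔ j < L) :
    D.rowLen i = L := by
  have h1 : ¬ (L < D.rowLen i) := by
    rw [← YoungDiagram.mem_iff_lt_rowLen, h]; omega
  rcases Nat.eq_zero_or_pos L with h0 | h0
  · omega
  · have : L - 1 < D.rowLen i := by
      rw [← YoungDiagram.mem_iff_lt_rowLen, h]; omega
    omega

lemma cells_YD3 {A B C : ℕ} {hAB : B ≤ A} {hBC : C ≤ B} :
    (YD3 A B C hAB hBC).cells = cells3 A B C := rfl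

lemma hasShape_YD3 {A B C : ℕ} (hAB : B ≤ A) (hBC : C ≤ B) (ν : Fin 3 → ℕ)
    (h0 : ν 0 = A) (h1 : ν 1 = B) (h2 : ν 2 = C) : HasShape (YD3 A B C hAB hBC) ν := by
  intro r
  match r with
  | 0 => simp only [Nat.zero_lt_succ, dif_pos]
         rw [show ((⟨0, by norm_num⟩ : Fin 3)) = 0 from rfl, h0]
         exact rowLen_eq_of fun j => by rw [mem_YD3]; omega
  | 1 => simp only [dif_pos (by norm_num : (1:ℕ) < 3)]
         rw [show ((⟨1, by norm_num⟩ : Fin 3)) = 1 from rfl, h1]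
         exact rowLen_eq_of fun j => by rw [mem_YD3]; omega
  | 2 => simp only [dif_pos (by norm_num : (2:ℕ) < 3)]
         rw [show ((⟨2, by norm_num⟩ : Fin 3)) = 2 from rfl, h2]
         exact rowLen_eq_of fun j => by rw [mem_YD3]; omega
  | (k+3) => simp only [dif_neg (by omega : ¬ (k+3 < 3))]
             exact rowLen_eq_of fun j => by rw [mem_YD3]; omega

lemma eq_YD3_of_hasShape {D : YoungDiagram} {ν : Fin 3 → ℕ} (h : HasShape D ν)
    (hAB : ν 1 ≤ ν 0) (hBC : ν 2 ≤ ν 1) : D = YD3 (ν 0) (ν 1) (ν 2) hAB hBC := by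
  have hmem : ∀ c : ℕ × ℕ, c ∈ D ↔ c ∈ YD3 (ν 0) (ν 1) (ν 2) hAB hBC := by
    rintro ⟨i, j⟩
    rw [YoungDiagram.mem_iff_lt_rowLen, h i, mem_YD3]
    clear hAB hBC
    match i with
    | 0 => simp only [Nat.zero_lt_succ, dif_pos]
           rw [show ((⟨0, by norm_num⟩ : Fin 3)) = 0 from rfl]
           first | (simp; omega) | simp | omega
    | 1 => simp only [dif_pos (by norm_num : (1:ℕ) < 3)]
           rw [show ((⟨1, by norm_num⟩ : Fin 3)) = 1 from rfl]
           first | (simp; omega) | simp | omega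
    | 2 => simp only [dif_pos (by norm_num : (2:ℕ) < 3)]
           rw [show ((⟨2, by norm_num⟩ : Fin 3)) = 2 from rfl]
           first | (simp; omega) | simp | omega
    | (k+3) => simp only [dif_neg (by omega : ¬ (k+3 < 3))]
               first | (simp; omega) | simp | omega
  ext c
  exact hmem c

lemma row_le_entry {D : YoungDiagram} (T : SemistandardYoungTableau D) {i j : ℕ}
    (h : (i, j) ∈ D) : i ≤ T i j := by
  induction i with
  | zero => exact Nat.zero_le _
  | succ k ih =>
    have hk : (k, j) ∈ D := D.up_left_mem (Nat.le_succ k) le_rfl h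
    have h2 := T.col_strict (Nat.lt_succ_self k) h
    have h1 := ih hk
    simp only [Nat.succ_eq_add_one] at *
    omega

lemma entry_eq_row {A B C : ℕ} {hAB : B ≤ A} {hBC : C ≤ B}
    (T : SemistandardYoungTableau (YD3 A B C hAB hBC))
    (h3 : ∀ c ∈ (YD3 A B C hAB hBC).cells, T c.1 c.2 < 3)
    {v j : ℕ} (hv : v < 3) (hj : j < C) : T v j = v := by
  have m0 : ((0:ℕ), j) ∈ YD3 A B C hAB hBC := by rw [mem_YD3]; omega
  have m1 : ((1:ℕ), j) ∈ YD3 A B C hAB hBC := by rw [mem_YD3]; omega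
  have m2 : ((2:ℕ), j) ∈ YD3 A B C hAB hBC := by rw [mem_YD3]; omega
  have e2 : T 2 j = 2 := by
    have h4 := h3 (2, j) ((YoungDiagram.mem_cells _).2 m2)
    simp only at h4
    have := row_le_entry T m2
    omega
  have e1 : T 1 j = 1 := by
    have := T.col_strict (show (1:ℕ) < 2 by norm_num) m2
    have := row_le_entry T m1
    omega
  have e0 : T 0 j = 0 := by
    have := T.col_strict (show (0:ℕ) < 1 by norm_num) m1
    omega
  interval_cases v <;> assumption

lemma content_le {A B C : ℕ} {hAB : B ≤ A} {hBC : C ≤ B}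
    (T : SemistandardYoungTableau (YD3 A B C hAB hBC)) (v : ℕ) :
    content T v ≤ A := by
  have key : ((YD3 A B C hAB hBC).cells.filter fun c => T c.1 c.2 = v).card ≤
      (Finset.range A).card := by
    apply Finset.card_le_card_of_injOn (fun c => c.2)
    · rintro ⟨i, j⟩ hc
      rw [Finset.mem_coe, Finset.mem_filter, YoungDiagram.mem_cells, mem_YD3] at hc
      rw [Finset.mem_coe, Finset.mem_range]
      dsimp only
      omega
    · rintro ⟨i, j⟩ hc ⟨i', j'⟩ hc' hcc
      simp only [Finset.coe_filter, Set.mem_setOf_eq] at hc hc'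
      simp only at hcc
      subst hcc
      have hcm : ((i:ℕ), j) ∈ YD3 A B C hAB hBC := (YoungDiagram.mem_cells _).1 hc.1
      have hcm' : ((i':ℕ), j) ∈ YD3 A B C hAB hBC := (YoungDiagram.mem_cells _).1 hc'.1
      have hfst : i = i' := by
        rcases lt_trichotomy i i' with h | h | h
        · have h5 := T.col_strict h hcm'
          omega
        · exact h
        · have h5 := T.col_strict h hcm
          omega
      subst hfst; rfl
  simpa [content] using key

lemma content_ge {A B C : ℕ} {hAB : B ≤ A} {hBC : C ≤ B}
    (T : SemistandardYoungTableau (YD3 A B C hAB hBC))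
    (h3 : ∀ c ∈ (YD3 A B C hAB hBC).cells, T c.1 c.2 < 3)
    {v : ℕ} (hv : v < 3) : C ≤ content T v := by
  have key : (Finset.range C).card ≤
      ((YD3 A B C hAB hBC).cells.filter fun c => T c.1 c.2 = v).card := by
    apply Finset.card_le_card_of_injOn (fun j => (v, j))
    · intro j hj
      rw [Finset.mem_coe, Finset.mem_range] at hj
      rw [Finset.mem_coe, Finset.mem_filter, YoungDiagram.mem_cells, mem_YD3]
      dsimp only
      exact ⟨by omega, entry_eq_row T h3 hv hj⟩
    · intro a _ b _ h
      simpa using h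
  simpa [content] using key

lemma content_sum {A B C : ℕ} {hAB : B ≤ A} {hBC : C ≤ B}
    (T : SemistandardYoungTableau (YD3 A B C hAB hBC))
    (h3 : ∀ c ∈ (YD3 A B C hAB hBC).cells, T c.1 c.2 < 3) :
    content T 0 + content T 1 + content T 2 = A + B + C := by
  have key := Finset.card_eq_sum_card_fiberwise
    (f := fun c : ℕ × ℕ => T c.1 c.2) (s := (YD3 A B C hAB hBC).cells) (t := Finset.range 3)
    (fun c hc => Finset.mem_range.2 (h3 c hc))
  rw [show ((YD3 A B C hAB hBC).cells).card = A + B + C by rw [cells_YD3]; exact card_cells3 A B C]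
    at key
  rw [Finset.sum_range_succ, Finset.sum_range_succ, Finset.sum_range_one] at key
  rw [content, content, content]
  omega

lemma ssyt_exists (A B C : ℕ) (hAB : B ≤ A) (hBC : C ≤ B) (α : Fin 3 → ℕ)
    (hsum : α 0 + α 1 + α 2 = A + B + C) (h0A : α 0 ≤ A) (h1A : α 1 ≤ A)
    (hC0 : C ≤ α 0) (hC1 : C ≤ α 1) (hlow : B + C ≤ α 0 + α 1) (hhigh : α 0 + α 1 ≤ A + B) :
    ∃ T : SemistandardYoungTableau (YD3 A B C hAB hBC),
      (∀ c ∈ (YD3 A B C hAB hBC).cells, T c.1 c.2 < 3) ∧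
      ∀ v : Fin 3, content T (v : ℕ) = α v := by
  set q := min (α 1 - C) (A - α 0) with hq_def
  set s := α 1 - C - q with hs_def
  have hq : α 0 + q ≤ A := by omega
  have hsle : C + s ≤ α 0 := by omega
  have hsB : C + s ≤ B := by omega
  have hcol : B ≤ α 0 + q ∨ A ≤ α 0 + q := by omega
  have hone : C + s + q = α 1 := by omega
  set f : ℕ → ℕ → ℕ := fun i j =>
    if i = 0 ∧ j < A then (if j < α 0 then 0 else if j < α 0 + q then 1 else 2)
    else if i = 1 ∧ j < B then (if j < C + s then 1 else 2)
    else if i = 2 ∧ j < C then 2 else 0 with hf_def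
  have hfrw : ∀ i j : ℕ, f i j =
      if i = 0 ∧ j < A then (if j < α 0 then 0 else if j < α 0 + q then 1 else 2)
      else if i = 1 ∧ j < B then (if j < C + s then 1 else 2)
      else if i = 2 ∧ j < C then 2 else 0 := fun i j => rfl
  have hrow : ∀ {i j1 j2 : ℕ}, j1 < j2 → (i, j2) ∈ YD3 A B C hAB hBC → f i j1 ≤ f i j2 := by
    intro i j1 j2 hj hmem
    rw [mem_YD3] at hmem
    rw [hfrw, hfrw]
    split_ifs <;> omega
  have hcolS : ∀ {i1 i2 j : ℕ}, i1 < i2 → (i2, j) ∈ YD3 A B C hAB hBC → f i1 j < f i2 j := by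
    intro i1 i2 j hi hmem
    rw [mem_YD3] at hmem
    rw [hfrw, hfrw]
    split_ifs <;> omega
  have hzero : ∀ {i j : ℕ}, (i, j) ∉ YD3 A B C hAB hBC → f i j = 0 := by
    intro i j hmem
    rw [mem_YD3] at hmem
    push_neg at hmem
    rw [hfrw]
    split_ifs <;> omega
  set T : SemistandardYoungTableau (YD3 A B C hAB hBC) := ⟨f, hrow, hcolS, hzero⟩ with hT_def
  have hTapp : ∀ i j : ℕ, T i j = f i j := fun _ _ => rfl
  have hlt3 : ∀ c ∈ (YD3 A B C hAB hBC).cells, T c.1 c.2 < 3 := by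
    rintro ⟨i, j⟩ _
    rw [hTapp, hfrw]
    split_ifs <;> omega
  have hc0 : content T 0 = α 0 := by
    rw [content]
    have heq : ((YD3 A B C hAB hBC).cells.filter fun c => T c.1 c.2 = 0)
        = (Finset.range (α 0)).image (fun j => ((0:ℕ), j)) := by
      ext ⟨i, j⟩
      simp only [Finset.mem_filter, YoungDiagram.mem_cells, mem_YD3, Finset.mem_image,
        Finset.mem_range, Prod.mk.injEq]
      rw [hTapp, hfrw]
      constructor
      · rintro ⟨hm, hval⟩
        split_ifs at hval <;> first | omega | exact ⟨j, by omega, by omega, rfl⟩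
      · rintro ⟨a, ha, h0, haj⟩
        subst haj
        refine ⟨by omega, ?_⟩
        split_ifs <;> omega
    rw [heq, Finset.card_image_of_injective _ (fun a b h => by simpa using h), Finset.card_range]
  have hc1 : content T 1 = α 1 := by
    rw [content]
    have heq : ((YD3 A B C hAB hBC).cells.filter fun c => T c.1 c.2 = 1)
        = ((Finset.Ico (α 0) (α 0 + q)).image (fun j => ((0:ℕ), j))) ∪
          ((Finset.range (C + s)).image (fun j => ((1:ℕ), j))) := by
      ext ⟨i, j⟩
      simp only [Finset.mem_filter, YoungDiagram.mem_cells, mem_YD3, Finset.mem_union,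
        Finset.mem_image, Finset.mem_range, Finset.mem_Ico, Prod.mk.injEq]
      rw [hTapp, hfrw]
      constructor
      · rintro ⟨hm, hval⟩
        split_ifs at hval <;>
          first
            | omega
            | exact Or.inl ⟨j, by omega, by omega, rfl⟩
            | exact Or.inr ⟨j, by omega, by omega, rfl⟩
      · rintro (⟨a, ha, h0, haj⟩ | ⟨a, ha, h0, haj⟩) <;> subst haj <;>
          refine ⟨by omega, ?_⟩ <;> split_ifs <;> omega
    rw [heq, Finset.card_union_of_disjoint, Finset.card_image_of_injective _
        (fun a b h => by simpa using h), Finset.card_image_of_injective _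
        (fun a b h => by simpa using h), Finset.card_range, Nat.card_Ico]
    · omega
    · rw [Finset.disjoint_left]
      rintro ⟨i, j⟩ hx hy
      simp only [Finset.mem_image, Finset.mem_range, Finset.mem_Ico, Prod.mk.injEq] at hx hy
      omega
  have hc2 : content T 2 = α 2 := by
    have hs := content_sum T hlt3
    omega
  refine ⟨T, hlt3, ?_⟩
  intro v
  fin_cases v
  · exact hc0
  · exact hc1
  · exact hc2

lemma exists_theta {a b z : ℝ} (hb : b ≤ z) (ha : z ≤ a) :
    ∃ θ : ℝ, 0 ≤ θ ∧ θ ≤ 1 ∧ z = θ * a + (1 - θ) * b := by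
  rcases eq_or_lt_of_le (hb.trans ha) with h | h
  · have hz : z = a := le_antisymm ha (h ▸ hb)
    exact ⟨1, zero_le_one, le_rfl, by rw [hz]; ring⟩
  · refine ⟨(z - b) / (a - b), div_nonneg (by linarith) (by linarith), ?_, ?_⟩
    · rw [div_le_one (by linarith)]; linarith
    · have hne : a - b ≠ 0 := sub_ne_zero.2 (ne_of_gt h)
      field_simp
      ring

lemma mem_hull_of_seg {S : Set (Fin 3 → ℝ)} {p q x : Fin 3 → ℝ}
    (hp : p ∈ convexHull ℝ S) (hq : q ∈ convexHull ℝ S) {θ : ℝ}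
    (h0 : 0 ≤ θ) (h1 : θ ≤ 1) (hx : x = θ • p + (1 - θ) • q) : x ∈ convexHull ℝ S := by
  rw [hx]
  exact (convex_convexHull ℝ S) hp hq h0 (by linarith) (by ring)

lemma comp_mem_perms_hull {v x : Fin 3 → ℝ} (σ : Equiv.Perm (Fin 3))
    (hx : x ∈ convexHull ℝ (perms v)) : x ∘ σ ∈ convexHull ℝ (perms v) := by
  let f : (Fin 3 → ℝ) →ₗ[ℝ] (Fin 3 → ℝ) :=
    { toFun := fun w => w ∘ σ
      map_add' := fun _ _ => rfl
      map_smul' := fun _ _ => rfl }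
  have himg : f '' (perms v) ⊆ perms v := by
    rintro _ ⟨w, ⟨π, rfl⟩, rfl⟩
    exact ⟨σ.trans π, rfl⟩
  have hmem : f x ∈ f '' convexHull ℝ (perms v) := ⟨x, hx, rfl⟩
  rw [f.image_convexHull] at hmem
  exact convexHull_mono himg hmem

lemma sort3 (x : Fin 3 → ℝ) :
    ∃ σ : Equiv.Perm (Fin 3), x (σ 1) ≤ x (σ 0) ∧ x (σ 2) ≤ x (σ 1) := by
  have e01 : ∀ i : Fin 3, (Equiv.swap (0:Fin 3) 1) i = ![1,0,2] i := by decide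
  have e02 : ∀ i : Fin 3, (Equiv.swap (0:Fin 3) 2) i = ![2,1,0] i := by decide
  have e12 : ∀ i : Fin 3, (Equiv.swap (1:Fin 3) 2) i = ![0,2,1] i := by decide
  have ec : ∀ i : Fin 3, ((Equiv.swap (0:Fin 3) 1).trans (Equiv.swap 0 2)) i = ![1,2,0] i := by
    decide
  have ec' : ∀ i : Fin 3, ((Equiv.swap (0:Fin 3) 2).trans (Equiv.swap 0 1)) i = ![2,0,1] i := by
    decide
  rcases le_total (x 0) (x 1) with h01 | h01 <;> rcases le_total (x 0) (x 2) with h02 | h02 <;>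
    rcases le_total (x 1) (x 2) with h12 | h12
  · exact ⟨Equiv.swap 0 2, by rw [e02 0, e02 1, e02 2]; simp [h01, h02, h12]⟩
  · exact ⟨(Equiv.swap (0:Fin 3) 1).trans (Equiv.swap 0 2),
      by rw [ec 0, ec 1, ec 2]; simp [h01, h02, h12]⟩
  · exact ⟨Equiv.swap 0 1, by rw [e01 0, e01 1, e01 2]; simp [h01, h02, h12]⟩
  · exact ⟨Equiv.swap 0 1, by rw [e01 0, e01 1, e01 2]; simp [h01, h02, h12]⟩
  · exact ⟨(Equiv.swap (0:Fin 3) 2).trans (Equiv.swap 0 1),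
      by rw [ec' 0, ec' 1, ec' 2]; simp [h01, h02, h12]⟩
  · exact ⟨(Equiv.swap (0:Fin 3) 2).trans (Equiv.swap 0 1),
      by rw [ec' 0, ec' 1, ec' 2]; simp [h01, h02, h12]⟩
  · exact ⟨Equiv.swap 1 2, by rw [e12 0, e12 1, e12 2]; simp [h01, h02, h12]⟩
  · exact ⟨1, by simp [h01, h02, h12]⟩

lemma rado_mem {v x : Fin 3 → ℝ} (hv1 : v 1 ≤ v 0) (hv2 : v 2 ≤ v 1)
    (hx1 : x 1 ≤ x 0) (hx2 : x 2 ≤ x 1)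
    (hd1 : x 0 ≤ v 0) (hd2 : x 0 + x 1 ≤ v 0 + v 1)
    (hsum : x 0 + x 1 + x 2 = v 0 + v 1 + v 2) : x ∈ convexHull ℝ (perms v) := by
  have hgen : ∀ σ : Equiv.Perm (Fin 3), v ∘ σ ∈ convexHull ℝ (perms v) :=
    fun σ => subset_convexHull ℝ _ ⟨σ, rfl⟩
  have hx2v : v 2 ≤ x 2 := by linarith
  have e01 : ∀ i : Fin 3, (Equiv.swap (0:Fin 3) 1) i = ![1,0,2] i := by decide
  have e02 : ∀ i : Fin 3, (Equiv.swap (0:Fin 3) 2) i = ![2,1,0] i := by decide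
  have e12 : ∀ i : Fin 3, (Equiv.swap (1:Fin 3) 2) i = ![0,2,1] i := by decide
  have ec : ∀ i : Fin 3, ((Equiv.swap (0:Fin 3) 1).trans (Equiv.swap 0 2)) i = ![1,2,0] i := by
    decide
  have ec' : ∀ i : Fin 3, ((Equiv.swap (0:Fin 3) 2).trans (Equiv.swap 0 1)) i = ![2,0,1] i := by
    decide
  rcases le_total (v 1) (x 0) with hcase | hcase
  · -- x 0 ∈ [v 1, v 0]
    obtain ⟨θ, hθ0, hθ1, hθ⟩ := exists_theta hcase hd1
    set pa := θ • v + (1 - θ) • (v ∘ Equiv.swap (0:Fin 3) 1) with hpa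
    set pb := θ • (v ∘ Equiv.swap (1:Fin 3) 2) +
        (1 - θ) • (v ∘ ((Equiv.swap (0:Fin 3) 1).trans (Equiv.swap 0 2))) with hpb
    have hpaM : pa ∈ convexHull ℝ (perms v) :=
      mem_hull_of_seg (subset_convexHull ℝ _ ⟨1, by simp⟩) (hgen _) hθ0 hθ1 rfl
    have hpbM : pb ∈ convexHull ℝ (perms v) := mem_hull_of_seg (hgen _) (hgen _) hθ0 hθ1 rfl
    obtain ⟨θ2, hθ20, hθ21, hθ2⟩ := exists_theta (z := x 1) (a := v 0 + v 1 - x 0) (b := v 2)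
      (by linarith) (by linarith)
    refine mem_hull_of_seg hpaM hpbM hθ20 hθ21 ?_
    have c0 : x 0 = (θ2 • pa + (1 - θ2) • pb) 0 := by
      simp only [hpa, hpb, Pi.add_apply, Pi.smul_apply, Function.comp_apply, smul_eq_mul]
      rw [show (Equiv.swap (0:Fin 3) 1) 0 = 1 from by decide,
        show (Equiv.swap (1:Fin 3) 2) 0 = 0 from by decide,
        show ((Equiv.swap (0:Fin 3) 1).trans (Equiv.swap 0 2)) 0 = 1 from by decide]
      linear_combination hθ
    have c1 : x 1 = (θ2 • pa + (1 - θ2) • pb) 1 := by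
      simp only [hpa, hpb, Pi.add_apply, Pi.smul_apply, Function.comp_apply, smul_eq_mul]
      rw [show (Equiv.swap (0:Fin 3) 1) 1 = 0 from by decide,
        show (Equiv.swap (1:Fin 3) 2) 1 = 2 from by decide,
        show ((Equiv.swap (0:Fin 3) 1).trans (Equiv.swap 0 2)) 1 = 2 from by decide]
      linear_combination hθ2 - θ2 * hθ
    have c2 : x 2 = (θ2 • pa + (1 - θ2) • pb) 2 := by
      simp only [hpa, hpb, Pi.add_apply, Pi.smul_apply, Function.comp_apply, smul_eq_mul]
      rw [show (Equiv.swap (0:Fin 3) 1) 2 = 2 from by decide,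
        show (Equiv.swap (1:Fin 3) 2) 2 = 1 from by decide,
        show ((Equiv.swap (0:Fin 3) 1).trans (Equiv.swap 0 2)) 2 = 0 from by decide]
      linear_combination (θ2 - 1) * hθ - hθ2 + hsum
    funext i
    fin_cases i
    exacts [c0, c1, c2]
  · -- x 0 ∈ [v 2, v 1]
    obtain ⟨θ, hθ0, hθ1, hθ⟩ := exists_theta (z := x 0) (a := v 1) (b := v 2)
      (by linarith) hcase
    set pa := θ • (v ∘ Equiv.swap (0:Fin 3) 1) +
        (1 - θ) • (v ∘ ((Equiv.swap (0:Fin 3) 2).trans (Equiv.swap 0 1))) with hpa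
    set pb := θ • (v ∘ ((Equiv.swap (0:Fin 3) 1).trans (Equiv.swap 0 2))) +
        (1 - θ) • (v ∘ Equiv.swap (0:Fin 3) 2) with hpb
    have hpaM : pa ∈ convexHull ℝ (perms v) := mem_hull_of_seg (hgen _) (hgen _) hθ0 hθ1 rfl
    have hpbM : pb ∈ convexHull ℝ (perms v) := mem_hull_of_seg (hgen _) (hgen _) hθ0 hθ1 rfl
    obtain ⟨θ2, hθ20, hθ21, hθ2⟩ := exists_theta (z := x 1) (a := v 0)
      (b := θ * v 2 + (1 - θ) * v 1) (by nlinarith [hθ]) (by linarith)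
    refine mem_hull_of_seg hpaM hpbM hθ20 hθ21 ?_
    have c0 : x 0 = (θ2 • pa + (1 - θ2) • pb) 0 := by
      simp only [hpa, hpb, Pi.add_apply, Pi.smul_apply, Function.comp_apply, smul_eq_mul]
      rw [show (Equiv.swap (0:Fin 3) 1) 0 = 1 from by decide,
        show ((Equiv.swap (0:Fin 3) 2).trans (Equiv.swap 0 1)) 0 = 2 from by decide,
        show ((Equiv.swap (0:Fin 3) 1).trans (Equiv.swap 0 2)) 0 = 1 from by decide,
        show (Equiv.swap (0:Fin 3) 2) 0 = 2 from by decide]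
      linear_combination hθ
    have c1 : x 1 = (θ2 • pa + (1 - θ2) • pb) 1 := by
      simp only [hpa, hpb, Pi.add_apply, Pi.smul_apply, Function.comp_apply, smul_eq_mul]
      rw [show (Equiv.swap (0:Fin 3) 1) 1 = 0 from by decide,
        show ((Equiv.swap (0:Fin 3) 2).trans (Equiv.swap 0 1)) 1 = 0 from by decide,
        show ((Equiv.swap (0:Fin 3) 1).trans (Equiv.swap 0 2)) 1 = 2 from by decide,
        show (Equiv.swap (0:Fin 3) 2) 1 = 1 from by decide]
      linear_combination hθ2
    have c2 : x 2 = (θ2 • pa + (1 - θ2) • pb) 2 := by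
      simp only [hpa, hpb, Pi.add_apply, Pi.smul_apply, Function.comp_apply, smul_eq_mul]
      rw [show (Equiv.swap (0:Fin 3) 1) 2 = 2 from by decide,
        show ((Equiv.swap (0:Fin 3) 2).trans (Equiv.swap 0 1)) 2 = 1 from by decide,
        show ((Equiv.swap (0:Fin 3) 1).trans (Equiv.swap 0 2)) 2 = 0 from by decide,
        show (Equiv.swap (0:Fin 3) 2) 2 = 0 from by decide]
      linear_combination - hθ - hθ2 + hsum
    funext i
    fin_cases i
    exacts [c0, c1, c2]

lemma perms_finite (v : Fin 3 → ℝ) : (perms v).Finite := by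
  have h : perms v = Set.range (fun π : Equiv.Perm (Fin 3) => v ∘ π) := by
    ext w; simp [perms, Set.range, eq_comm]
  rw [h]; exact Set.finite_range _

lemma smul_perms (t : ℕ) (p : Fin 3 → ℕ) :
    (t : ℝ) • perms (castN p) = perms (castN fun j => t * p j) := by
  ext w
  simp only [Set.mem_smul_set, perms, Set.mem_setOf_eq]
  constructor
  · rintro ⟨u, ⟨π, rfl⟩, rfl⟩
    refine ⟨π, funext fun j => ?_⟩
    simp [castN, Function.comp]
  · rintro ⟨π, rfl⟩
    refine ⟨castN p ∘ π, ⟨π, rfl⟩, funext fun j => ?_⟩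
    simp [castN, Function.comp]

lemma fin3_cases (a : Fin 3) : a = 0 ∨ a = 1 ∨ a = 2 := by
  fin_cases a
  exacts [Or.inl rfl, Or.inr (Or.inl rfl), Or.inr (Or.inr rfl)]

lemma coord3 {p : Fin 3 → ℕ} (h0 : p 1 ≤ p 0) (h1 : p 2 ≤ p 1) (a : Fin 3) :
    p 2 ≤ p a ∧ p a ≤ p 0 := by
  rcases fin3_cases a with rfl | rfl | rfl <;> omega

lemma pair3 {p : Fin 3 → ℕ} (h0 : p 1 ≤ p 0) (h1 : p 2 ≤ p 1) {a b : Fin 3} (hab : a ≠ b) :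
    p 1 + p 2 ≤ p a + p b ∧ p a + p b ≤ p 0 + p 1 := by
  rcases fin3_cases a with rfl | rfl | rfl <;> rcases fin3_cases b with rfl | rfl | rfl <;>
    first
      | exact absurd rfl hab
      | constructor <;> omega

lemma sum3_comp {M : Type*} [AddCommMonoid M] (f : Fin 3 → M) (σ : Equiv.Perm (Fin 3)) :
    f (σ 0) + f (σ 1) + f (σ 2) = f 0 + f 1 + f 2 := by
  have h := Equiv.sum_comp σ f
  rw [Fin.sum_univ_three] at h
  rw [h, Fin.sum_univ_three]

lemma sum_bound {F : Finset (Fin 3 → ℝ)} {w : (Fin 3 → ℝ) → ℝ} (hw0 : ∀ u ∈ F, 0 ≤ w u)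
    (Q : Set (Fin 3 → ℝ)) [DecidablePred (· ∈ Q)] {g : (Fin 3 → ℝ) → ℝ} {KQ KN : ℝ}
    (hQ : ∀ u ∈ F, u ∈ Q → g u ≤ KQ) (hN : ∀ u ∈ F, u ∉ Q → g u ≤ KN) :
    ∑ u ∈ F, w u * g u ≤
      (∑ u ∈ F.filter (· ∈ Q), w u) * KQ + (∑ u ∈ F.filter (· ∉ Q), w u) * KN := by
  rw [← Finset.sum_filter_add_sum_filter_not F (· ∈ Q) (fun u => w u * g u)]
  apply add_le_add
  · rw [Finset.sum_mul]
    apply Finset.sum_le_sum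
    intro u hu
    rw [Finset.mem_filter] at hu
    exact mul_le_mul_of_nonneg_left (hQ u hu.1 hu.2) (hw0 u hu.1)
  · rw [Finset.sum_mul]
    apply Finset.sum_le_sum
    intro u hu
    rw [Finset.mem_filter] at hu
    exact mul_le_mul_of_nonneg_left (hN u hu.1 hu.2) (hw0 u hu.1)

lemma mem_suppTS_perm (l m : Fin 3 → ℕ) (hl : IsPartition3 l) (hm : IsPartition3 m)
    (t i : ℕ) (hit : i ≤ t) (π : Equiv.Perm (Fin 3)) :
    (fun j => (t - i) * l (π j) + i * m (π j)) ∈ suppTS l m t := by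
  set ν : Fin 3 → ℕ := fun j => (t - i) * l j + i * m j with hν
  set β : Fin 3 → ℕ := fun j => ν (π j) with hβ
  have hν01 : ν 1 ≤ ν 0 := add_le_add (mul_le_mul_right hl.1 _) (mul_le_mul_right hm.1 _)
  have hν12 : ν 2 ≤ ν 1 := add_le_add (mul_le_mul_right hl.2 _) (mul_le_mul_right hm.2 _)
  have hco : ∀ a : Fin 3, ν 2 ≤ ν a ∧ ν a ≤ ν 0 := coord3 hν01 hν12
  have hpa : ∀ {a b : Fin 3}, a ≠ b → ν 1 + ν 2 ≤ ν a + ν b ∧ ν a + ν b ≤ ν 0 + ν 1 :=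
    fun hab => pair3 hν01 hν12 hab
  have h01 : π 0 ≠ π 1 := π.injective.ne (by decide)
  have hsumβ : β 0 + β 1 + β 2 = ν 0 + ν 1 + ν 2 := sum3_comp ν π
  obtain ⟨T, hT3, hTc⟩ := ssyt_exists (ν 0) (ν 1) (ν 2) hν01 hν12 β
    hsumβ (hco (π 0)).2 (hco (π 1)).2 (hco (π 0)).1 (hco (π 1)).1 (hpa h01).1 (hpa h01).2
  exact ⟨i, hit, YD3 (ν 0) (ν 1) (ν 2) hν01 hν12, hasShape_YD3 hν01 hν12 ν rfl rfl rfl,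
    T, hT3, hTc⟩

lemma gen_subset_supp (l m : Fin 3 → ℕ) (hl : IsPartition3 l) (hm : IsPartition3 m) (t : ℕ) :
    perms (castN fun j => t * l j) ∪ perms (castN fun j => t * m j) ⊆
      castN '' suppTS l m t := by
  rintro w (⟨π, rfl⟩ | ⟨π, rfl⟩)
  · refine ⟨fun j => (t - 0) * l (π j) + 0 * m (π j),
      mem_suppTS_perm l m hl hm t 0 (Nat.zero_le t) π, funext fun j => ?_⟩
    simp [castN]
  · refine ⟨fun j => (t - t) * l (π j) + t * m (π j),
      mem_suppTS_perm l m hl hm t t le_rfl π, funext fun j => ?_⟩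
    simp [castN]

lemma supp_subset_hull (l m : Fin 3 → ℕ) (hl : IsPartition3 l) (hm : IsPartition3 m)
    (t : ℕ) (ht : 0 < t) :
    castN '' suppTS l m t ⊆
      convexHull ℝ (perms (castN fun j => t * l j) ∪ perms (castN fun j => t * m j)) := by
  rintro _ ⟨α, ⟨i, hit, D, hshape, T, hT3, hTc⟩, rfl⟩
  set ν : Fin 3 → ℕ := fun j => (t - i) * l j + i * m j with hν
  have hν01 : ν 1 ≤ ν 0 := add_le_add (mul_le_mul_right hl.1 _) (mul_le_mul_right hm.1 _)
  have hν12 : ν 2 ≤ ν 1 := add_le_add (mul_le_mul_right hl.2 _) (mul_le_mul_right hm.2 _)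
  have hDeq : D = YD3 (ν 0) (ν 1) (ν 2) hν01 hν12 := eq_YD3_of_hasShape hshape hν01 hν12
  subst hDeq
  have hαle : ∀ v : Fin 3, α v ≤ ν 0 := fun v => by
    rw [← hTc v]; exact content_le T _
  have hαge : ∀ v : Fin 3, ν 2 ≤ α v := fun v => by
    rw [← hTc v]; exact content_ge T hT3 v.isLt
  have hαsum : α 0 + α 1 + α 2 = ν 0 + ν 1 + ν 2 := by
    have hcs := content_sum T hT3
    have e0 : content T 0 = α 0 := hTc 0
    have e1 : content T 1 = α 1 := hTc 1
    have e2 : content T 2 = α 2 := hTc 2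
    omega
  obtain ⟨σ, hs1, hs2⟩ := sort3 (castN α)
  have hsortsum : α (σ 0) + α (σ 1) + α (σ 2) = ν 0 + ν 1 + ν 2 := by
    rw [sum3_comp α σ]; exact hαsum
  have hxmem : castN α ∘ σ ∈ convexHull ℝ (perms (castN ν)) := by
    apply rado_mem (Nat.cast_le.2 hν01) (Nat.cast_le.2 hν12) hs1 hs2
    · exact Nat.cast_le.2 (hαle (σ 0))
    · show ((α (σ 0) : ℝ)) + (α (σ 1) : ℝ) ≤ (ν 0 : ℝ) + (ν 1 : ℝ)
      have := hαge (σ 2)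
      exact_mod_cast Nat.le_of_add_le_add_right
        (by omega : α (σ 0) + α (σ 1) + ν 2 ≤ (ν 0 + ν 1) + ν 2)
    · show ((α (σ 0) : ℝ)) + (α (σ 1) : ℝ) + (α (σ 2) : ℝ) = (ν 0 : ℝ) + (ν 1 : ℝ) + (ν 2 : ℝ)
      exact_mod_cast hsortsum
  have hcomp : castN α ∈ convexHull ℝ (perms (castN ν)) := by
    have h2 := comp_mem_perms_hull σ.symm hxmem
    rwa [show (castN α ∘ σ) ∘ σ.symm = castN α from funext fun j => by simp] at h2
  refine convexHull_min ?_ (convex_convexHull ℝ _) hcomp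
  rintro w ⟨π, rfl⟩
  have htne : (t : ℝ) ≠ 0 := Nat.cast_ne_zero.2 (Nat.pos_iff_ne_zero.1 ht)
  have hti : ((t - i : ℕ) : ℝ) = (t : ℝ) - i := by
    rw [Nat.cast_sub hit]
  have hmemL : castN (fun j => t * l j) ∘ π ∈
      convexHull ℝ (perms (castN fun j => t * l j) ∪ perms (castN fun j => t * m j)) :=
    subset_convexHull ℝ _ (Or.inl ⟨π, rfl⟩)
  have hmemM : castN (fun j => t * m j) ∘ π ∈
      convexHull ℝ (perms (castN fun j => t * l j) ∪ perms (castN fun j => t * m j)) :=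
    subset_convexHull ℝ _ (Or.inr ⟨π, rfl⟩)
  have hkey := (convex_convexHull ℝ
      (perms (castN fun j => t * l j) ∪ perms (castN fun j => t * m j))) hmemL hmemM
      (a := ((t - i : ℕ) : ℝ) / t) (b := (i : ℝ) / t)
      (div_nonneg (Nat.cast_nonneg _) (Nat.cast_nonneg _))
      (div_nonneg (Nat.cast_nonneg _) (Nat.cast_nonneg _))
      (by rw [hti]; field_simp; ring)
  have heq : castN ν ∘ π =
      (((t - i : ℕ) : ℝ) / t) • (castN (fun j => t * l j) ∘ π) +
        ((i : ℝ) / t) • (castN (fun j => t * m j) ∘ π) := by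
    funext j
    simp only [Pi.add_apply, Pi.smul_apply, Function.comp_apply, smul_eq_mul, castN, hν, hti]
    push_cast
    field_simp
    rw [hti]
    ring
  rw [heq]
  exact hkey

lemma int_point (l m : Fin 3 → ℕ) (n : ℕ) (hl : IsPartition3 l) (hm : IsPartition3 m)
    (hln : l 0 + l 1 + l 2 = n) (hmn : m 0 + m 1 + m 2 = n)
    (h1 : m 0 < l 0) (h3 : l 2 = m 2 + 1) (t : ℕ) (ht : 0 < t) (y : Fin 3 → ℤ)
    (hy : (fun i => (y i : ℝ)) ∈ convexHull ℝ
      (perms (castN fun j => t * l j) ∪ perms (castN fun j => t * m j))) :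
    ∃ α ∈ suppTS l m t, y = fun i => (α i : ℤ) := by
  classical
  have hm01 : m 0 + m 1 = l 0 + l 1 + 1 := by omega
  set U : Set (Fin 3 → ℝ) :=
    perms (castN fun j => t * l j) ∪ perms (castN fun j => t * m j) with hU
  have hUfin : U.Finite := (perms_finite _).union (perms_finite _)
  rw [hUfin.convexHull_eq] at hy
  obtain ⟨w, hw0', hw1, hwc⟩ := hy
  set F := hUfin.toFinset with hF
  have hw0 : ∀ u ∈ F, 0 ≤ w u := fun u hu => hw0' u (hUfin.mem_toFinset.1 hu)
  have hmemU : ∀ u ∈ F, u ∈ U := fun u hu => hUfin.mem_toFinset.1 hu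
  have hwc' : ∑ u ∈ F, w u • u = (fun i => (y i : ℝ)) := by
    rw [Finset.centerMass_eq_of_sum_1 _ id hw1] at hwc
    simpa using hwc
  have hcoord : ∀ j : Fin 3, (y j : ℝ) = ∑ u ∈ F, w u * u j := by
    intro j
    have := congrFun hwc' j
    rw [Finset.sum_apply] at this
    simp only [Pi.smul_apply, smul_eq_mul] at this
    exact this.symm
  set c : ℝ := ∑ u ∈ F.filter (· ∈ perms (castN fun j => t * m j)), w u with hc
  have hc0 : 0 ≤ c := Finset.sum_nonneg fun u hu => hw0 u (Finset.filter_subset _ _ hu)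
  have hc1 : c ≤ 1 := by
    rw [← hw1]
    exact Finset.sum_le_sum_of_subset_of_nonneg (Finset.filter_subset _ _)
      (fun u hu _ => hw0 u hu)
  have hcompl : ∑ u ∈ F.filter (· ∉ perms (castN fun j => t * m j)), w u = 1 - c := by
    have hsp := Finset.sum_filter_add_sum_filter_not F (· ∈ perms (castN fun j => t * m j)) w
    rw [hw1] at hsp
    linarith [hsp]
  -- coordinate bounds for members of U
  have hMco : ∀ u ∈ perms (castN fun j => t * m j), ∀ j : Fin 3, u j ≤ (t : ℝ) * m 0 := by
    rintro u ⟨π, rfl⟩ j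
    have hb := (coord3 hm.1 hm.2 (π j)).2
    show ((t * m (π j) : ℕ) : ℝ) ≤ (t : ℝ) * m 0
    push_cast
    have : (m (π j) : ℝ) ≤ m 0 := Nat.cast_le.2 hb
    nlinarith [Nat.cast_nonneg (α := ℝ) t]
  have hLco : ∀ u ∈ perms (castN fun j => t * l j), ∀ j : Fin 3, u j ≤ (t : ℝ) * l 0 := by
    rintro u ⟨π, rfl⟩ j
    have hb := (coord3 hl.1 hl.2 (π j)).2
    show ((t * l (π j) : ℕ) : ℝ) ≤ (t : ℝ) * l 0
    push_cast
    have : (l (π j) : ℝ) ≤ l 0 := Nat.cast_le.2 hb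
    nlinarith [Nat.cast_nonneg (α := ℝ) t]
  have hMpair : ∀ u ∈ perms (castN fun j => t * m j), ∀ j k : Fin 3, j ≠ k →
      u j + u k ≤ (t : ℝ) * (m 0 + m 1) := by
    rintro u ⟨π, rfl⟩ j k hjk
    have hb := (pair3 hm.1 hm.2 (π.injective.ne hjk)).2
    show ((t * m (π j) : ℕ) : ℝ) + ((t * m (π k) : ℕ) : ℝ) ≤ (t : ℝ) * (m 0 + m 1)
    push_cast
    have : (m (π j) : ℝ) + m (π k) ≤ (m 0 : ℝ) + m 1 := by exact_mod_cast hb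
    nlinarith [Nat.cast_nonneg (α := ℝ) t]
  have hLpair : ∀ u ∈ perms (castN fun j => t * l j), ∀ j k : Fin 3, j ≠ k →
      u j + u k ≤ (t : ℝ) * (l 0 + l 1) := by
    rintro u ⟨π, rfl⟩ j k hjk
    have hb := (pair3 hl.1 hl.2 (π.injective.ne hjk)).2
    show ((t * l (π j) : ℕ) : ℝ) + ((t * l (π k) : ℕ) : ℝ) ≤ (t : ℝ) * (l 0 + l 1)
    push_cast
    have : (l (π j) : ℝ) + l (π k) ≤ (l 0 : ℝ) + l 1 := by exact_mod_cast hb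
    nlinarith [Nat.cast_nonneg (α := ℝ) t]
  have hUsum : ∀ u ∈ U, u 0 + u 1 + u 2 = (t : ℝ) * n := by
    rintro u (⟨π, rfl⟩ | ⟨π, rfl⟩)
    · show ((t * l (π 0) : ℕ) : ℝ) + ((t * l (π 1) : ℕ) : ℝ) + ((t * l (π 2) : ℕ) : ℝ) = _
      have hs : l (π 0) + l (π 1) + l (π 2) = n := by rw [sum3_comp l π]; exact hln
      have hsr : (l (π 0) : ℝ) + l (π 1) + l (π 2) = n := by exact_mod_cast hs
      push_cast
      linear_combination (t : ℝ) * hsr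
    · show ((t * m (π 0) : ℕ) : ℝ) + ((t * m (π 1) : ℕ) : ℝ) + ((t * m (π 2) : ℕ) : ℝ) = _
      have hs : m (π 0) + m (π 1) + m (π 2) = n := by rw [sum3_comp m π]; exact hmn
      have hsr : (m (π 0) : ℝ) + m (π 1) + m (π 2) = n := by exact_mod_cast hs
      push_cast
      linear_combination (t : ℝ) * hsr
  -- global bounds
  have hpairB : ∀ j k : Fin 3, j ≠ k →
      (y j : ℝ) + y k ≤ (t : ℝ) * (l 0 + l 1) + c * t := by
    intro j k hjk
    have hyy : (y j : ℝ) + y k = ∑ u ∈ F, w u * (u j + u k) := by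
      rw [hcoord j, hcoord k, ← Finset.sum_add_distrib]
      exact Finset.sum_congr rfl fun u _ => (mul_add _ _ _).symm
    have hb := sum_bound hw0 (perms (castN fun j => t * m j))
      (g := fun u => u j + u k) (KQ := (t : ℝ) * (m 0 + m 1)) (KN := (t : ℝ) * (l 0 + l 1))
      (fun u _ hu => hMpair u hu j k hjk)
      (fun u hu hnu => hLpair u ((hmemU u hu).resolve_right hnu) j k hjk)
    rw [← hc, hcompl] at hb
    have hmm : ((m 0 : ℝ) + m 1) = (l 0 : ℝ) + l 1 + 1 := by exact_mod_cast hm01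
    rw [hyy]
    calc ∑ u ∈ F, w u * (u j + u k) ≤
        c * ((t : ℝ) * (m 0 + m 1)) + (1 - c) * ((t : ℝ) * (l 0 + l 1)) := hb
      _ = (t : ℝ) * (l 0 + l 1) + c * t := by rw [hmm]; ring
  have hcoordB : ∀ j : Fin 3, (y j : ℝ) ≤ (t : ℝ) * l 0 - c * t * ((l 0 : ℝ) - m 0) := by
    intro j
    have hb := sum_bound hw0 (perms (castN fun j => t * m j))
      (g := fun u => u j) (KQ := (t : ℝ) * m 0) (KN := (t : ℝ) * l 0)
      (fun u _ hu => hMco u hu j)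
      (fun u hu hnu => hLco u ((hmemU u hu).resolve_right hnu) j)
    rw [← hc, hcompl] at hb
    rw [hcoord j]
    calc ∑ u ∈ F, w u * u j ≤ c * ((t : ℝ) * m 0) + (1 - c) * ((t : ℝ) * l 0) := hb
      _ = (t : ℝ) * l 0 - c * t * ((l 0 : ℝ) - m 0) := by ring
  have hsumy : (y 0 : ℝ) + y 1 + y 2 = (t : ℝ) * n := by
    have e : ∀ u ∈ F, w u * (u 0 + u 1 + u 2) = w u * ((t : ℝ) * n) :=
      fun u hu => by rw [hUsum u (hmemU u hu)]
    have : (y 0 : ℝ) + y 1 + y 2 = ∑ u ∈ F, w u * (u 0 + u 1 + u 2) := by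
      rw [hcoord 0, hcoord 1, hcoord 2, ← Finset.sum_add_distrib, ← Finset.sum_add_distrib]
      exact Finset.sum_congr rfl fun u _ => by ring
    rw [this, Finset.sum_congr rfl e, ← Finset.sum_mul, hw1, one_mul]
  -- choose i
  set L1 : ℤ := (t : ℤ) * ((l 0 : ℤ) + (l 1 : ℤ)) with hL1
  set E : ℤ := max 0 (max (y 0 + y 1 - L1) (max (y 0 + y 2 - L1) (y 1 + y 2 - L1))) with hE
  have hE0 : 0 ≤ E := le_max_left _ _
  have hEle : (E : ℝ) ≤ c * t := by
    have hct : 0 ≤ c * t := mul_nonneg hc0 (Nat.cast_nonneg t)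
    have h01 := hpairB 0 1 (by decide)
    have h02 := hpairB 0 2 (by decide)
    have h12 := hpairB 1 2 (by decide)
    have hL1r : ((L1 : ℤ) : ℝ) = (t : ℝ) * ((l 0 : ℝ) + l 1) := by
      rw [hL1]; push_cast; ring
    have hcast : (E : ℝ) = max 0 (max ((y 0 : ℝ) + y 1 - (L1 : ℝ))
        (max ((y 0 : ℝ) + y 2 - (L1 : ℝ)) ((y 1 : ℝ) + y 2 - (L1 : ℝ)))) := by
      rw [hE]; push_cast; rfl
    rw [hcast]
    refine max_le hct (max_le ?_ (max_le ?_ ?_)) <;> linarith [h01, h02, h12, hL1r]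
  have hEt : E ≤ (t : ℤ) := by
    have hr : (E : ℝ) ≤ (t : ℝ) := by
      have : c * t ≤ 1 * t := mul_le_mul_of_nonneg_right hc1 (Nat.cast_nonneg t)
      rw [one_mul] at this
      linarith
    exact_mod_cast hr
  set i : ℕ := E.toNat with hi
  have hiE : (i : ℤ) = E := Int.toNat_of_nonneg hE0
  have hi_t : i ≤ t := by omega
  set A : ℕ := (t - i) * l 0 + i * m 0 with hA
  set Bn : ℕ := (t - i) * l 1 + i * m 1 with hBn
  set Cn : ℕ := (t - i) * l 2 + i * m 2 with hCn
  have htiZ : ((t - i : ℕ) : ℤ) = (t : ℤ) - i := by rw [Nat.cast_sub hi_t]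
  have hAZ : (A : ℤ) = (t : ℤ) * l 0 - i * ((l 0 : ℤ) - m 0) := by
    rw [hA]; push_cast [htiZ]; ring
  have hABZ : (A : ℤ) + Bn = L1 + i := by
    have hmmZ : (m 0 : ℤ) + m 1 = (l 0 : ℤ) + l 1 + 1 := by exact_mod_cast hm01
    rw [hA, hBn, hL1]; push_cast [htiZ]; linear_combination (i : ℤ) * hmmZ
  have hABCZ : (A : ℤ) + Bn + Cn = (t : ℤ) * n := by
    have hlnZ : (l 0 : ℤ) + l 1 + l 2 = n := by exact_mod_cast hln
    have hmnZ : (m 0 : ℤ) + m 1 + m 2 = n := by exact_mod_cast hmn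
    rw [hA, hBn, hCn]; push_cast [htiZ]
    linear_combination ((t : ℤ) - i) * hlnZ + (i : ℤ) * hmnZ
  have hsumyZ : y 0 + y 1 + y 2 = (t : ℤ) * n := by exact_mod_cast hsumy
  have hyA : ∀ j : Fin 3, y j ≤ (A : ℤ) := by
    intro j
    have hd1 : (1 : ℝ) ≤ (l 0 : ℝ) - m 0 := by
      have : (m 0 : ℝ) + 1 ≤ l 0 := by exact_mod_cast h1
      linarith
    have hmul : (E : ℝ) * ((l 0 : ℝ) - m 0) ≤ c * t * ((l 0 : ℝ) - m 0) :=
      mul_le_mul_of_nonneg_right hEle (by linarith)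
    have hr : (y j : ℝ) ≤ ((A : ℤ) : ℝ) := by
      have hAr : ((A : ℤ) : ℝ) = (t : ℝ) * l 0 - (E : ℝ) * ((l 0 : ℝ) - m 0) := by
        rw [hAZ]; push_cast [← hiE]; ring
      rw [hAr]
      have := hcoordB j
      linarith
    exact_mod_cast hr
  have hyp01 : y 0 + y 1 ≤ (A : ℤ) + Bn := by
    have : y 0 + y 1 - L1 ≤ E := le_trans (le_max_left _ _) (le_max_right _ _)
    linarith [hABZ, hiE, this]
  have hyp02 : y 0 + y 2 ≤ (A : ℤ) + Bn := by
    have : y 0 + y 2 - L1 ≤ E :=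
      le_trans (le_trans (le_max_left _ _) (le_max_right _ _)) (le_max_right _ _)
    linarith [hABZ, hiE, this]
  have hyp12 : y 1 + y 2 ≤ (A : ℤ) + Bn := by
    have : y 1 + y 2 - L1 ≤ E :=
      le_trans (le_trans (le_max_right _ _) (le_max_right _ _)) (le_max_right _ _)
    linarith [hABZ, hiE, this]
  have hyge : ∀ j : Fin 3, (Cn : ℤ) ≤ y j := by
    intro j
    rcases fin3_cases j with rfl | rfl | rfl
    · linarith [hyp12, hsumyZ, hABCZ]
    · linarith [hyp02, hsumyZ, hABCZ]
    · linarith [hyp01, hsumyZ, hABCZ]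
  have hy0 : ∀ j : Fin 3, 0 ≤ y j := fun j =>
    le_trans (by exact_mod_cast Int.ofNat_nonneg Cn : (0 : ℤ) ≤ (Cn : ℤ)) (hyge j)
  set α : Fin 3 → ℕ := fun j => (y j).toNat with hα
  have hαy : ∀ j : Fin 3, (α j : ℤ) = y j := fun j => Int.toNat_of_nonneg (hy0 j)
  have hABn : Bn ≤ A := add_le_add (mul_le_mul_right hl.1 _) (mul_le_mul_right hm.1 _)
  have hBCn : Cn ≤ Bn := add_le_add (mul_le_mul_right hl.2 _) (mul_le_mul_right hm.2 _)
  have hsumα : α 0 + α 1 + α 2 = A + Bn + Cn := by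
    have : (α 0 : ℤ) + α 1 + α 2 = (A : ℤ) + Bn + Cn := by
      rw [hαy 0, hαy 1, hαy 2]; linarith [hsumyZ, hABCZ]
    exact_mod_cast this
  have h0A : α 0 ≤ A := by have := hyA 0; rw [← hαy 0] at this; exact_mod_cast this
  have h1A : α 1 ≤ A := by have := hyA 1; rw [← hαy 1] at this; exact_mod_cast this
  have hC0 : Cn ≤ α 0 := by have := hyge 0; rw [← hαy 0] at this; exact_mod_cast this
  have hC1 : Cn ≤ α 1 := by have := hyge 1; rw [← hαy 1] at this; exact_mod_cast this
  have hlow : Bn + Cn ≤ α 0 + α 1 := by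
    have h2A : (y 2 : ℤ) ≤ A := hyA 2
    have : (Bn : ℤ) + Cn ≤ (α 0 : ℤ) + α 1 := by
      rw [hαy 0, hαy 1]; linarith [hsumyZ, hABCZ, h2A]
    exact_mod_cast this
  have hhigh : α 0 + α 1 ≤ A + Bn := by
    have : (α 0 : ℤ) + α 1 ≤ (A : ℤ) + Bn := by rw [hαy 0, hαy 1]; exact hyp01
    exact_mod_cast this
  obtain ⟨T, hT3, hTc⟩ := ssyt_exists A Bn Cn hABn hBCn α hsumα h0A h1A hC0 hC1 hlow hhigh
  refine ⟨α, ⟨i, hi_t, YD3 A Bn Cn hABn hBCn,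
    hasShape_YD3 hABn hBCn (fun j => (t - i) * l j + i * m j) rfl rfl rfl,
    T, hT3, hTc⟩, funext fun j => (hαy j).symm⟩

/-- Let `λ, μ` be incomparable partitions of length 3 of the same size `n` with `λ₁ > μ₁`,
`λ₃ = μ₃ + 1`, whose convex hull `P` of permutations has `{λ, μ}` as its set of
dominance-maximal partition lattice points.  Then for every `t > 0` the polynomial
`ts = Σ_{i=0}^t s_{(t-i)λ + iμ}` has saturated Newton polytope and `Newt(ts) = tP`. -/
theorem stmt_14 (l m : Fin 3 → ℕ) (n : ℕ)
    (hl : IsPartition3 l) (hm : IsPartition3 m)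
    (hln : l 0 + l 1 + l 2 = n) (hmn : m 0 + m 1 + m 2 = n)
    (hinc : ¬Dom l m ∧ ¬Dom m l)
    (h1 : m 0 < l 0) (h3 : l 2 = m 2 + 1)
    (hmax : ∀ p : Fin 3 → ℕ,
      IsMaxPLP (convexHull ℝ (perms (castN l) ∪ perms (castN m))) p ↔ (p = l ∨ p = m)) :
    ∀ t : ℕ, 0 < t →
      (convexHull ℝ (castN '' suppTS l m t) =
          (t : ℝ) • convexHull ℝ (perms (castN l) ∪ perms (castN m))) ∧
        ∀ y : Fin 3 → ℤ,
          (fun i => (y i : ℝ)) ∈ convexHull ℝ (castN '' suppTS l m t) ↔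
            ∃ α ∈ suppTS l m t, y = fun i => (α i : ℤ) := by
  intro t ht
  have hsmul : (t : ℝ) • convexHull ℝ (perms (castN l) ∪ perms (castN m)) =
      convexHull ℝ (perms (castN fun j => t * l j) ∪ perms (castN fun j => t * m j)) := by
    rw [← convexHull_smul, Set.smul_set_union, smul_perms, smul_perms]
  have partA : convexHull ℝ (castN '' suppTS l m t) =
      (t : ℝ) • convexHull ℝ (perms (castN l) ∪ perms (castN m)) := by
    rw [hsmul]
    apply Set.Subset.antisymm
    · exact convexHull_min (supp_subset_hull l m hl hm t ht) (convex_convexHull ℝ _)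
    · exact convexHull_min
        ((gen_subset_supp l m hl hm t).trans (subset_convexHull ℝ _))
        (convex_convexHull ℝ _)
  refine ⟨partA, fun y => ⟨?_, ?_⟩⟩
  · intro hy
    apply int_point l m n hl hm hln hmn h1 h3 t ht y
    rwa [partA, hsmul] at hy
  · rintro ⟨α, hα, rfl⟩
    have hcast : (fun i => ((α i : ℤ) : ℝ)) = castN α := funext fun i => by push_cast; rfl
    rw [hcast]
    exact subset_convexHull ℝ _ ⟨α, hα, rfl⟩
end

section
/- Let λ, μ ∈ ℝⁿ be weakly decreasing vectors of the same sum. Then the permutohedron of μ (convex hull of all coordinate permutations of μ) is contained in the permutohedron of λ if and only if μ is dominated by λ, i.e., μ₁+⋯+μ_k ≤ λ₁+⋯+λ_k for all k (Rado's theorem). -/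
open Finset

/-- Conversion of a `Fin`-filter sum to a `range` sum. -/
lemma sum_filter_lt_eq {n : ℕ} (v : Fin n → ℝ) (k : ℕ) :
    ∑ i ∈ Finset.univ.filter (fun i : Fin n => (i : ℕ) < k), v i
      = ∑ j ∈ Finset.range k, (if h : j < n then v ⟨j, h⟩ else 0) := by
  classical
  set g : ℕ → ℝ := fun j => if h : j < n then v ⟨j, h⟩ else 0 with hg
  have h1 : ∑ i ∈ Finset.univ.filter (fun i : Fin n => (i : ℕ) < k), v i
      = ∑ j ∈ Finset.range n, (if j < k then g j else 0) := by
    rw [Finset.sum_filter, ← Fin.sum_univ_eq_sum_range (fun j => if j < k then g j else 0) n]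
    refine Finset.sum_congr rfl fun i _ => ?_
    simp [hg, i.is_lt]
  rw [h1]
  have e1 : ∑ j ∈ Finset.range n, (if j < k then g j else 0)
      = ∑ j ∈ Finset.range (max n k), (if j < k then g j else 0) := by
    refine Finset.sum_subset (Finset.range_subset_range.2 (le_max_left _ _)) ?_
    intro j _ hnj
    have hj : ¬ j < n := by simpa using hnj
    simp [hg, hj]
  have e2 : ∑ j ∈ Finset.range (max n k), (if j < k then g j else 0)
      = ∑ j ∈ Finset.range k, (if j < k then g j else 0) := by
    refine (Finset.sum_subset (Finset.range_subset_range.2 (le_max_right _ _)) ?_).symm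
    intro j _ hnj
    have hj : ¬ j < k := by simpa using hnj
    simp [hj]
  rw [e1, e2]
  refine Finset.sum_congr rfl fun j hj => ?_
  simp [Finset.mem_range.1 hj]

/-- Abel summation estimate: if `d` is weakly increasing, all initial partial sums of `x`
are nonnegative, and the total sum of `x` is zero, then `∑ d i * x i ≤ 0`. -/
lemma abel_nonpos {n : ℕ} (d x : Fin n → ℝ)
    (hd : ∀ i j : Fin n, i ≤ j → d i ≤ d j)
    (hS : ∀ k : ℕ, 0 ≤ ∑ i ∈ Finset.univ.filter (fun i : Fin n => (i : ℕ) < k), x i)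
    (hSn : ∑ i, x i = 0) :
    ∑ i, d i * x i ≤ 0 := by
  classical
  set D : ℕ → ℝ := fun j => if h : j < n then d ⟨j, h⟩ else 0 with hD
  set X : ℕ → ℝ := fun j => if h : j < n then x ⟨j, h⟩ else 0 with hX
  have h0 : ∑ i, d i * x i = ∑ j ∈ Finset.range n, D j • X j := by
    rw [← Fin.sum_univ_eq_sum_range (fun j => D j • X j) n]
    refine Finset.sum_congr rfl fun i _ => ?_
    simp [hD, hX, i.is_lt]
  have hGn : ∑ j ∈ Finset.range n, X j = 0 := by
    rw [← Fin.sum_univ_eq_sum_range X n]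
    rw [← hSn]
    refine Finset.sum_congr rfl fun i _ => ?_
    simp [hX, i.is_lt]
  have hGk : ∀ k : ℕ, 0 ≤ ∑ j ∈ Finset.range k, X j := by
    intro k
    have := hS k
    rwa [sum_filter_lt_eq x k] at this
  rw [h0, Finset.sum_range_by_parts D X n, hGn, smul_zero, zero_sub, neg_nonpos]
  refine Finset.sum_nonneg fun j hj => ?_
  have hj1 : j + 1 < n := by
    have := Finset.mem_range.1 hj
    omega
  have hj0 : j < n := by omega
  have hDle : D j ≤ D (j + 1) := by
    simp only [hD, dif_pos hj1, dif_pos hj0]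
    exact hd _ _ (by simp [Fin.le_def])
  have : (0:ℝ) ≤ D (j + 1) - D j := by linarith
  exact smul_nonneg this (hGk (j + 1))

/-- The permutohedron of `v : Fin n → ℝ`: the convex hull of all coordinate permutations. -/
def permutohedron {n : ℕ} (v : Fin n → ℝ) : Set (Fin n → ℝ) :=
  convexHull ℝ {w | ∃ π : Equiv.Perm (Fin n), w = v ∘ π}

/-- Rado's theorem: for weakly decreasing vectors `λ, μ ∈ ℝⁿ` of equal sum, the permutohedron
of `μ` is contained in that of `λ` iff `μ` is dominated by `λ`, i.e., every initial partial
sum of `μ` is at most the corresponding partial sum of `λ`. -/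
theorem stmt_17 {n : ℕ} (l m : Fin n → ℝ)
    (hl : ∀ i j : Fin n, i ≤ j → l j ≤ l i) (hm : ∀ i j : Fin n, i ≤ j → m j ≤ m i)
    (hsum : ∑ i, l i = ∑ i, m i) :
    permutohedron m ⊆ permutohedron l ↔
      ∀ k : ℕ, ∑ i ∈ Finset.univ.filter (fun i : Fin n => (i : ℕ) < k), m i ≤
        ∑ i ∈ Finset.univ.filter (fun i : Fin n => (i : ℕ) < k), l i := by
  classical
  constructor
  · -- containment → dominance
    intro hsub k
    have hm_mem : m ∈ permutohedron l :=
      hsub (subset_convexHull ℝ _ ⟨1, by ext i; simp⟩)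
    set c : Fin n → ℝ := fun i => if (i : ℕ) < k then 1 else 0 with hc
    have hmono : Monovary c l := by
      intro i j hij
      have hji : j ≤ i := le_of_not_gt fun h => absurd (hl i j h.le) (not_le.2 hij)
      by_cases h : (i : ℕ) < k
      · have hjk : (j : ℕ) < k := lt_of_le_of_lt hji h
        simp [hc, h, hjk]
      · simp only [hc, if_neg h]
        split_ifs <;> norm_num
    have hrepr : ∀ u : Fin n → ℝ,
        ∑ i ∈ Finset.univ.filter (fun i : Fin n => (i : ℕ) < k), u i = ∑ i, c i • u i := by
      intro u
      rw [Finset.sum_filter]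
      refine Finset.sum_congr rfl fun i _ => ?_
      by_cases h : (i : ℕ) < k <;> simp [hc, h]
    have key : permutohedron l ⊆
        {w : Fin n → ℝ | ∑ i ∈ Finset.univ.filter (fun i : Fin n => (i : ℕ) < k), w i ≤
          ∑ i ∈ Finset.univ.filter (fun i : Fin n => (i : ℕ) < k), l i} := by
      apply convexHull_min
      · rintro w ⟨π, rfl⟩
        simp only [Set.mem_setOf_eq]
        rw [hrepr, hrepr]
        exact hmono.sum_smul_comp_perm_le_sum_smul (σ := π)
      · exact convex_halfSpace_le
          ⟨fun a b => Finset.sum_add_distrib, fun r a => by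
            simp only [Pi.smul_apply, smul_eq_mul, Finset.mul_sum]⟩ _
    exact key hm_mem
  · -- dominance → containment
    intro hdom
    have hfin : {w : Fin n → ℝ | ∃ π : Equiv.Perm (Fin n), w = l ∘ π}.Finite := by
      have hset : {w : Fin n → ℝ | ∃ π : Equiv.Perm (Fin n), w = l ∘ π}
          = Set.range (fun π : Equiv.Perm (Fin n) => l ∘ π) := by
        ext w
        simp [Set.mem_setOf_eq, Set.mem_range, eq_comm]
      rw [hset]
      exact Set.finite_range _
    have hmem : m ∈ permutohedron l := by
      by_contra hnot
      obtain ⟨f, u, hfm, hfb⟩ := geometric_hahn_banach_point_closed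
        (convex_convexHull ℝ _) (hfin.isClosed_convexHull (𝕜 := ℝ)) hnot
      set c : Fin n → ℝ := fun i => f (Pi.single i 1) with hc
      have hf : ∀ w : Fin n → ℝ, f w = ∑ i, w i * c i := by
        intro w
        conv_lhs => rw [pi_eq_sum_univ w]
        rw [map_sum]
        refine Finset.sum_congr rfl fun i _ => ?_
        rw [map_smul, smul_eq_mul]
        congr 2
        funext j
        simp [Pi.single_apply, eq_comm]
      set σ : Equiv.Perm (Fin n) := Tuple.sort c with hσ
      set d : Fin n → ℝ := c ∘ σ with hd
      have hdmono : Monotone d := Tuple.monotone_sort c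
      have habel : ∑ i, d i * l i ≤ ∑ i, d i * m i := by
        have h := abel_nonpos d (fun i => l i - m i) (fun i j hij => hdmono hij)
          (fun k => by
            have hk := hdom k
            rw [Finset.sum_sub_distrib]
            linarith)
          (by rw [Finset.sum_sub_distrib]; linarith)
        have hexp : ∑ i, d i * (l i - m i) = ∑ i, d i * l i - ∑ i, d i * m i := by
          rw [← Finset.sum_sub_distrib]
          exact Finset.sum_congr rfl fun i _ => by ring
        rw [hexp] at h
        linarith
      have hanti : Antivary d m := by
        intro i j hij
        have hji : j ≤ i := le_of_not_gt fun h => absurd (hm i j h.le) (not_le.2 hij)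
        exact hdmono hji
      have hre : ∑ i, d i * m i ≤ ∑ i, c i * m i := by
        have h := hanti.sum_smul_le_sum_comp_perm_smul (σ := σ⁻¹)
        have heq : ∀ i, d (σ⁻¹ i) = c i := by
          intro i
          simp [hd]
        simp only [smul_eq_mul] at h
        calc ∑ i, d i * m i ≤ ∑ i, d (σ⁻¹ i) * m i := h
          _ = ∑ i, c i * m i := Finset.sum_congr rfl fun i _ => by rw [heq]
      have hmem' : (l ∘ ⇑σ⁻¹ : Fin n → ℝ) ∈ permutohedron l :=
        subset_convexHull ℝ _ ⟨σ⁻¹, rfl⟩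
      have h1 : f (l ∘ ⇑σ⁻¹) = ∑ i, d i * l i := by
        rw [hf, ← Equiv.sum_comp σ (fun i => (l ∘ ⇑σ⁻¹) i * c i)]
        refine Finset.sum_congr rfl fun j _ => ?_
        simp [hd, mul_comm]
      have h2 : f m = ∑ i, c i * m i := by
        rw [hf]
        exact Finset.sum_congr rfl fun i _ => mul_comm _ _
      have hlt := hfb _ hmem'
      rw [h1] at hlt
      rw [h2] at hfm
      linarith
    apply convexHull_min _ (convex_convexHull ℝ _)
    rintro w ⟨π, rfl⟩
    have hlin : IsLinearMap ℝ (fun w : Fin n → ℝ => w ∘ π) :=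
      ⟨fun a b => rfl, fun r a => rfl⟩
    have himg := hlin.image_convexHull {w : Fin n → ℝ | ∃ ρ : Equiv.Perm (Fin n), w = l ∘ ρ}
    have hmem2 : (m ∘ ⇑π) ∈ (fun w : Fin n → ℝ => w ∘ π) '' permutohedron l :=
      ⟨m, hmem, rfl⟩
    rw [permutohedron, himg] at hmem2
    refine convexHull_mono ?_ hmem2
    rintro w ⟨v, ⟨ρ, rfl⟩, rfl⟩
    exact ⟨π.trans ρ, rfl⟩
end
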